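/- Let H be a complex Hilbert space, T a bounded linear operator on H, and f ∈ H such that {T^n f}_{n=0}^∞ is a frame for H. Then for every φ ∈ H, (T*)^n φ → 0 in norm as n → ∞. -/
import Mathlib


open scoped ComplexInnerProductSpace

/-- If `{T^n f}_{n=0}^∞` is a frame for a complex Hilbert space `H`, then the
iterates of the adjoint of `T` tend to zero pointwise in norm. -/
theorem adjoint_pow_tendsto_zero_of_orbit_frame
    {H : Type*} [NormedAddCommGroup H] [InnerProductSpace ℂ H] [CompleteSpace H]
    (T : H →L[ℂ] H) (f : H)
    (hframe : ∃ A B : ℝ, 0 < A ∧ 0 < B ∧ ∀ g : H,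
      A * ‖g‖ ^ 2 ≤ ∑' n : ℕ, ‖⟪g, (T ^ n) f⟫‖ ^ 2 ∧
      ∑' n : ℕ, ‖⟪g, (T ^ n) f⟫‖ ^ 2 ≤ B * ‖g‖ ^ 2) :
    ∀ φ : H, Filter.Tendsto (fun n : ℕ => ((ContinuousLinearMap.adjoint T) ^ n) φ)
      Filter.atTop (nhds 0) := by
  obtain ⟨A, B, hA, hB, hfr⟩ := hframe
  intro φ
  set S := ContinuousLinearMap.adjoint T with hS
  set c : ℕ → ℝ := fun n => ‖⟪φ, (T ^ n) f⟫‖ ^ 2 with hc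
  have key : ∀ k n : ℕ, ⟪(S ^ k) φ, (T ^ n) f⟫ = ⟪φ, (T ^ (n + k)) f⟫ := by
    intro k
    induction k with
    | zero => intro n; simp
    | succ k ih =>
      intro n
      have h1 : (S ^ (k + 1)) φ = S ((S ^ k) φ) := by
        rw [pow_succ']; rfl
      have h2 : T ((T ^ n) f) = (T ^ (n + 1)) f := by
        rw [pow_succ']; rfl
      have h3 : n + 1 + k = n + (k + 1) := by omega
      rw [h1, hS, ContinuousLinearMap.adjoint_inner_left, h2, ih (n + 1), h3]
  have hbound : ∀ k, A * ‖(S ^ k) φ‖ ^ 2 ≤ ∑' n, c (n + k) := by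
    intro k
    calc A * ‖(S ^ k) φ‖ ^ 2 ≤ ∑' n : ℕ, ‖⟪(S ^ k) φ, (T ^ n) f⟫‖ ^ 2 := (hfr _).1
      _ = ∑' n, c (n + k) := by
          refine tsum_congr fun n => ?_
          rw [hc]; simp only; rw [key]
  have htail : Filter.Tendsto (fun k => ∑' n, c (n + k)) Filter.atTop (nhds 0) :=
    tendsto_sum_nat_add c
  have h1 : Filter.Tendsto (fun k => A * ‖(S ^ k) φ‖ ^ 2) Filter.atTop (nhds 0) :=
    squeeze_zero (fun k => by positivity) hbound htail
  have h2 : Filter.Tendsto (fun k => ‖(S ^ k) φ‖ ^ 2) Filter.atTop (nhds 0) := by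
    have := h1.const_mul A⁻¹
    simpa [← mul_assoc, inv_mul_cancel₀ hA.ne'] using this
  have h3 : Filter.Tendsto (fun k => ‖(S ^ k) φ‖) Filter.atTop (nhds 0) := by
    have := (Real.continuous_sqrt.tendsto 0).comp h2
    simpa [Function.comp_def, Real.sqrt_sq (norm_nonneg _)] using this
  exact tendsto_zero_iff_norm_tendsto_zero.mpr h3
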